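/- Let p₀, p₁, p₂ be real numbers with p₀ > 0, p₁ ≥ 0, p₂ ≥ 0 and p₀ + p₁ + p₂ = 1. Define sequences u₀^{(N)}, u₁^{(N)}, u₂^{(N)} of reals by u_n^{(0)} = p_n for n ∈ {0,1,2} and u_n^{(N+1)} = u_n^{(N)} p_n / (u₀^{(N)} p₀ + u₁^{(N)} p₁ + u₂^{(N)} p₂). Then the denominators are strictly positive for every N, and for all N and all n ∈ {0,1,2} one has u_n^{(N)} = p_n^{N+1} / (p₀^{N+1} + p₁^{N+1} + p₂^{N+1}). -/

import Mathlib

/-- Closed form (proved by induction in Proposition 3.1) for the marginal error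
probabilities after `N` successful rounds of the single-carrier qutrit protocol:
the normalized post-selection recurrence has positive denominators and satisfies
`u_n^{(N)} = p_n^{N+1} / (p₀^{N+1} + p₁^{N+1} + p₂^{N+1})`. -/
theorem single_carrier_closed_form
    (p₀ p₁ p₂ : ℝ) (h₀ : 0 < p₀) (h₁ : 0 ≤ p₁) (h₂ : 0 ≤ p₂)
    (hsum : p₀ + p₁ + p₂ = 1)
    (u₀ u₁ u₂ : ℕ → ℝ)
    (hu₀0 : u₀ 0 = p₀) (hu₁0 : u₁ 0 = p₁) (hu₂0 : u₂ 0 = p₂)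
    (hrec₀ : ∀ N, u₀ (N + 1) = u₀ N * p₀ / (u₀ N * p₀ + u₁ N * p₁ + u₂ N * p₂))
    (hrec₁ : ∀ N, u₁ (N + 1) = u₁ N * p₁ / (u₀ N * p₀ + u₁ N * p₁ + u₂ N * p₂))
    (hrec₂ : ∀ N, u₂ (N + 1) = u₂ N * p₂ / (u₀ N * p₀ + u₁ N * p₁ + u₂ N * p₂)) :
    (∀ N, 0 < u₀ N * p₀ + u₁ N * p₁ + u₂ N * p₂) ∧
    (∀ N, u₀ N = p₀ ^ (N + 1) / (p₀ ^ (N + 1) + p₁ ^ (N + 1) + p₂ ^ (N + 1)) ∧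
          u₁ N = p₁ ^ (N + 1) / (p₀ ^ (N + 1) + p₁ ^ (N + 1) + p₂ ^ (N + 1)) ∧
          u₂ N = p₂ ^ (N + 1) / (p₀ ^ (N + 1) + p₁ ^ (N + 1) + p₂ ^ (N + 1))) := by
  have hS : ∀ N : ℕ, 0 < p₀ ^ (N + 1) + p₁ ^ (N + 1) + p₂ ^ (N + 1) := by
    intro N
    have := pow_pos h₀ (N + 1)
    have := pow_nonneg h₁ (N + 1)
    have := pow_nonneg h₂ (N + 1)
    linarith
  have key : ∀ N, u₀ N = p₀ ^ (N + 1) / (p₀ ^ (N + 1) + p₁ ^ (N + 1) + p₂ ^ (N + 1)) ∧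
          u₁ N = p₁ ^ (N + 1) / (p₀ ^ (N + 1) + p₁ ^ (N + 1) + p₂ ^ (N + 1)) ∧
          u₂ N = p₂ ^ (N + 1) / (p₀ ^ (N + 1) + p₁ ^ (N + 1) + p₂ ^ (N + 1)) := by
    intro N
    induction N with
    | zero =>
      rw [pow_one, pow_one, pow_one, hsum, hu₀0, hu₁0, hu₂0]
      norm_num
    | succ N ih =>
      obtain ⟨e0, e1, e2⟩ := ih
      set S := p₀ ^ (N + 1) + p₁ ^ (N + 1) + p₂ ^ (N + 1) with hSdef
      have hSpos := hS N
      have hS'pos := hS (N + 1)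
      have hden : u₀ N * p₀ + u₁ N * p₁ + u₂ N * p₂ =
          (p₀ ^ (N + 2) + p₁ ^ (N + 2) + p₂ ^ (N + 2)) / S := by
        rw [e0, e1, e2]; field_simp; ring
      refine ⟨?_, ?_, ?_⟩
      · rw [hrec₀, hden, e0]
        rw [show N + 1 + 1 = N + 2 from rfl]
        field_simp
        rw [div_eq_iff (show S ≠ 0 from ne_of_gt hSpos)]; ring
      · rw [hrec₁, hden, e1]
        rw [show N + 1 + 1 = N + 2 from rfl]
        field_simp
        rw [div_eq_iff (show S ≠ 0 from ne_of_gt hSpos)]; ring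
      · rw [hrec₂, hden, e2]
        rw [show N + 1 + 1 = N + 2 from rfl]
        field_simp
        rw [div_eq_iff (show S ≠ 0 from ne_of_gt hSpos)]; ring
  refine ⟨?_, key⟩
  intro N
  obtain ⟨e0, e1, e2⟩ := key N
  have hSpos := hS N
  have hS'pos := hS (N + 1)
  have hden : u₀ N * p₀ + u₁ N * p₁ + u₂ N * p₂ =
      (p₀ ^ (N + 2) + p₁ ^ (N + 2) + p₂ ^ (N + 2)) / (p₀ ^ (N + 1) + p₁ ^ (N + 1) + p₂ ^ (N + 1)) := by
    rw [e0, e1, e2]; field_simp; ring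
  rw [hden]
  exact div_pos (by simpa using hS (N + 1)) hSpos
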